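/- Under Mallows' model with n i.i.d. samples, for any alternative a, any ranking h₁ ∈ ℒ(𝒜) in which a is not ranked at the top, and any 0<α<1, let B = {b ∈ 𝒜 : b ≻_{h₁} a} be the set of alternatives ranked above a in h₁. Then there exist K ∈ ℝ and Γ ∈ [0,1] such that the test f defined on profiles P ∈ ℒ(𝒜)^n by f(P)=1 if w_P(B≻a)>K, f(P)=0 if w_P(B≻a)<K, and f(P)=Γ if w_P(B≻a)=K, has Size(f)=α over H₀ = L_{a≻others}, and f is a level-α most powerful test for H₀ = L_{a≻others} vs the simple alternative h₁. -/

import Mathlib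

namespace Voting

open Finset

section Generic

variable {S Θ : Type*} [Fintype S] [Fintype Θ]

/-- `Size π f θ` : the probability that test `f` rejects when the ground truth is `θ`. -/
noncomputable def Size (π : Θ → S → ℝ) (f : S → ℝ) (θ : Θ) : ℝ :=
  ∑ P, π θ P * f P

/-- `Power π f θ` : the power of test `f` at parameter `θ`. -/
noncomputable def Power (π : Θ → S → ℝ) (f : S → ℝ) (θ : Θ) : ℝ :=
  ∑ P, π θ P * f P

/-- A (randomized) test is a critical function with values in `[0,1]`. -/
def IsTest (f : S → ℝ) : Prop := ∀ P, 0 ≤ f P ∧ f P ≤ 1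

/-- `Size(f) ≤ α` over the null hypothesis `H0`. -/
def SizeLe (π : Θ → S → ℝ) (H0 : Set Θ) (f : S → ℝ) (α : ℝ) : Prop :=
  ∀ h0 ∈ H0, Size π f h0 ≤ α

/-- `Size(f) = α` over the null hypothesis `H0` (the max over `H0` equals `α`). -/
def SizeEq (π : Θ → S → ℝ) (H0 : Set Θ) (f : S → ℝ) (α : ℝ) : Prop :=
  SizeLe π H0 f α ∧ ∃ h0 ∈ H0, Size π f h0 = α

/-- `f` is a level-`α` most powerful test for `H0` vs the simple alternative `h1`. -/
def IsMostPowerful (π : Θ → S → ℝ) (H0 : Set Θ) (h1 : Θ) (α : ℝ) (f : S → ℝ) : Prop :=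
  IsTest f ∧ SizeLe π H0 f α ∧
    ∀ g : S → ℝ, IsTest g → SizeLe π H0 g α → Power π g h1 ≤ Power π f h1

/-- `f` is a level-`α` uniformly most powerful test for `H0` vs `H1`. -/
def IsUMP (π : Θ → S → ℝ) (H0 H1 : Set Θ) (α : ℝ) (f : S → ℝ) : Prop :=
  ∀ h1 ∈ H1, IsMostPowerful π H0 h1 α f

end Generic

/-- A ranking over `m` alternatives: `V a` is the position of alternative `a`
(smaller position = more preferred), i.e. `a ≻_V b ↔ V a < V b`. -/
abbrev Ranking (m : ℕ) := Equiv.Perm (Fin m)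

/-- Kendall-tau distance: the number of (unordered) pairs on which `V` and `W` disagree. -/
def KT {m : ℕ} (V W : Ranking m) : ℕ :=
  (Finset.univ.filter (fun p : Fin m × Fin m => V p.1 < V p.2 ∧ W p.2 < W p.1)).card

/-- Mallows' single-sample probability of `V` given ground truth `W` and dispersion `φ`. -/
noncomputable def mallows1 {m : ℕ} (φ : ℝ) (W V : Ranking m) : ℝ :=
  φ ^ KT V W / ∑ U : Ranking m, φ ^ KT U W

/-- Mallows' model with `n` i.i.d. samples. -/
noncomputable def mallows {m : ℕ} (φ : ℝ) (n : ℕ) :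
    Ranking m → (Fin n → Ranking m) → ℝ :=
  fun W P => ∏ i, mallows1 φ W (P i)

/-- `L_{a≻others}` : rankings in which `a` is ranked at the top. -/
def Ltop {m : ℕ} (a : Fin m) : Set (Ranking m) := {V | ∀ b, b ≠ a → V a < V b}

/-- `L_{others≻a}` : rankings in which `a` is ranked at the bottom. -/
def Lbot {m : ℕ} (a : Fin m) : Set (Ranking m) := {V | ∀ b, b ≠ a → V b < V a}

/-- `w_P(b≻a)` : the weighted-majority-graph weight on the edge `b → a` of profile `P`. -/
def wpair {m n : ℕ} (P : Fin n → Ranking m) (b a : Fin m) : ℤ :=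
  ((Finset.univ.filter (fun i => P i b < P i a)).card : ℤ) -
    ((Finset.univ.filter (fun i => P i a < P i b)).card : ℤ)

/-- `w_P(B≻a) = Σ_{b∈B} w_P(b≻a)`. -/
def wset {m n : ℕ} (P : Fin n → Ranking m) (B : Finset (Fin m)) (a : Fin m) : ℤ :=
  ∑ b ∈ B, wpair P b a

/-- The threshold test on the statistic `w_P(B≻a)` with threshold `K`/randomization `Γ`. -/
noncomputable def wTest {m : ℕ} (n : ℕ) (B : Finset (Fin m)) (a : Fin m) (K Γ : ℝ) :
    (Fin n → Ranking m) → ℝ :=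
  fun P =>
    if K < ((wset P B a : ℤ) : ℝ) then 1
    else if ((wset P B a : ℤ) : ℝ) < K then 0
    else Γ

/-- The Borda score of `a` in `V`: the number of alternatives ranked below `a`. -/
def Borda {m : ℕ} (a : Fin m) (V : Ranking m) : ℕ :=
  (Finset.univ.filter (fun b => V a < V b)).card

section Aux
open Finset
variable {m : ℕ}

noncomputable def Zsum (φ : ℝ) (W : Ranking m) : ℝ := ∑ U : Ranking m, φ ^ KT U W

lemma KT_relabel (σ V W : Ranking m) : KT (σ.trans V) (σ.trans W) = KT V W := by
  unfold KT
  apply Finset.card_equiv (Equiv.prodCongr σ σ)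
  intro p
  simp only [Finset.mem_filter, Finset.mem_univ, true_and]
  simp [Equiv.trans_apply]

lemma Zsum_const (φ : ℝ) (W W' : Ranking m) : Zsum φ W = Zsum φ W' := by
  unfold Zsum
  set σ : Ranking m := W'.trans W.symm with hσ
  have hWW : σ.trans W = W' := by
    ext z; simp [hσ, Equiv.trans]
  apply Fintype.sum_equiv (Equiv.mulRight σ)
  intro U
  have : (Equiv.mulRight σ U) = σ.trans U := rfl
  rw [this, ← hWW]
  rw [KT_relabel σ U W]

lemma Zsum_pos (φ : ℝ) (hφ0 : 0 < φ) (W : Ranking m) : 0 < Zsum φ W := by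
  apply Finset.sum_pos (fun U _ => pow_pos hφ0 _)
  exact univ_nonempty

lemma mallows1_nonneg (φ : ℝ) (hφ0 : 0 < φ) (W V : Ranking m) : 0 ≤ mallows1 φ W V :=
  le_of_lt (div_pos (pow_pos hφ0 _) (Zsum_pos φ hφ0 W))

lemma mallows1_eq (φ : ℝ) (W V : Ranking m) : mallows1 φ W V = φ ^ KT V W / Zsum φ W := rfl

lemma sum_mallows1 (φ : ℝ) (hφ0 : 0 < φ) (W : Ranking m) : ∑ V : Ranking m, mallows1 φ W V = 1 := by
  unfold mallows1
  rw [← Finset.sum_div]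
  exact div_self (ne_of_gt (Zsum_pos φ hφ0 W))

/-- single-ranking statistic `w_V(B≻a)`. -/
def wV (a : Fin m) (B : Finset (Fin m)) (V : Ranking m) : ℤ :=
  ∑ b ∈ B, if V b < V a then 1 else -1

lemma wset_eq {n : ℕ} (a : Fin m) (B : Finset (Fin m)) (ha : a ∉ B) (P : Fin n → Ranking m) :
    wset P B a = ∑ i, wV a B (P i) := by
  unfold wset wV
  rw [Finset.sum_comm]
  apply Finset.sum_congr rfl
  intro b hb
  have hba : b ≠ a := fun h => ha (h ▸ hb)
  unfold wpair
  rw [Finset.card_filter, Finset.card_filter]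
  push_cast
  rw [← Finset.sum_sub_distrib]
  apply Finset.sum_congr rfl
  intro i _
  have : P i b ≠ P i a := fun h => hba ((P i).injective h)
  rcases lt_or_gt_of_ne this with h | h
  · simp [h, asymm h]
  · simp [h, asymm h, not_lt_of_gt h]

lemma wV_le (a : Fin m) (B : Finset (Fin m)) (V : Ranking m) :
    wV a B V ≤ B.card ∧ -(B.card : ℤ) ≤ wV a B V := by
  constructor
  · calc wV a B V ≤ ∑ b ∈ B, 1 := Finset.sum_le_sum (fun b _ => by split <;> omega)
    _ = B.card := by simp
  · calc (-(B.card:ℤ)) = ∑ b ∈ B, (-1 : ℤ) := by simp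
    _ ≤ wV a B V := Finset.sum_le_sum (fun b _ => by split <;> omega)

end Aux
section Swap
open Finset
variable {m : ℕ}

lemma swap_trans_trans (x y : Fin m) (V : Ranking m) :
    (Equiv.swap x y).trans ((Equiv.swap x y).trans V) = V := by
  ext z; simp [Equiv.trans_apply, Equiv.swap_apply_self]

lemma KT_swap (V ω : Ranking m) (x y : Fin m) (hxy : (ω x : ℕ) + 1 = (ω y : ℕ)) (hV : V x < V y) :
    KT V ((Equiv.swap x y).trans ω) = KT V ω + 1 := by
  have hxny : x ≠ y := by
    intro h; rw [h] at hxy; omega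
  have hinj : ∀ u v : Fin m, u ≠ v → (ω u : ℕ) ≠ (ω v : ℕ) := by
    intro u v huv he
    exact huv (ω.injective (Fin.val_injective he))
  unfold KT
  have hset : (univ.filter (fun p : Fin m × Fin m =>
        V p.1 < V p.2 ∧ ((Equiv.swap x y).trans ω) p.2 < ((Equiv.swap x y).trans ω) p.1)) =
      insert (x, y) (univ.filter (fun p : Fin m × Fin m => V p.1 < V p.2 ∧ ω p.2 < ω p.1)) := by
    ext ⟨u, v⟩
    simp only [Finset.mem_filter, Finset.mem_insert, Finset.mem_univ, true_and,
      Prod.mk.injEq]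
    simp only [Equiv.trans_apply]
    by_cases hVuv : V u < V v
    · simp only [hVuv, true_and]
      by_cases hux : u = x
      · by_cases hvx : v = x
        · rw [hux, hvx] at hVuv; exact absurd hVuv (lt_irrefl _)
        · by_cases hvy : v = y
          · rw [hux, hvy, Equiv.swap_apply_right, Equiv.swap_apply_left]
            simp only [Fin.lt_def, true_and, true_or, iff_true]
            omega
          · have h1 := hinj v x hvx
            rw [hux, Equiv.swap_apply_left, Equiv.swap_apply_of_ne_of_ne hvx hvy]
            simp only [Fin.lt_def, hvy, true_and, and_false, false_or]
            omega
      · by_cases huy : u = y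
        · by_cases hvx : v = x
          · rw [huy, hvx] at hVuv
            exact absurd (hVuv.trans hV) (lt_irrefl _)
          · by_cases hvy : v = y
            · rw [huy, hvy] at hVuv; exact absurd hVuv (lt_irrefl _)
            · have h1 := hinj v x hvx
              rw [huy, Equiv.swap_apply_right, Equiv.swap_apply_of_ne_of_ne hvx hvy]
              have : (y = x) = False := by simp [Ne.symm hxny]
              simp only [Fin.lt_def, this, false_and, false_or]
              omega
        · have h2 := hinj u y huy
          rw [Equiv.swap_apply_of_ne_of_ne hux huy]
          by_cases hvx : v = x
          · rw [hvx, Equiv.swap_apply_left]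
            simp only [Fin.lt_def, hux, false_and, false_or]
            omega
          · by_cases hvy : v = y
            · rw [hvy, Equiv.swap_apply_right]
              simp only [Fin.lt_def, hux, false_and, false_or]
              omega
            · rw [Equiv.swap_apply_of_ne_of_ne hvx hvy]
              simp only [Fin.lt_def, hux, false_and, false_or]
    · have hne : ¬ (u = x ∧ v = y) := by
        rintro ⟨h1, h2⟩; rw [h1, h2] at hVuv; exact hVuv hV
      simp only [hVuv, false_and, false_or, hne]
  rw [hset, Finset.card_insert_of_notMem]
  simp only [Finset.mem_filter, Finset.mem_univ, true_and, not_and]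
  intro _
  simp only [Fin.lt_def]
  omega

end Swap
section Dom1
open Finset
variable {m : ℕ}

lemma w_swap_ge (a x y : Fin m) (B : Finset (Fin m)) (ha : a ∉ B) (hxa : x ≠ a)
    (hx : x ∉ B) (hy : y ∈ B) (V : Ranking m) (hV : V x < V y) :
    wV a B V ≤ wV a B ((Equiv.swap x y).trans V) := by
  have hya : y ≠ a := fun h => ha (h ▸ hy)
  have hax : a ≠ x := Ne.symm hxa
  have hay : a ≠ y := Ne.symm hya
  unfold wV
  apply Finset.sum_le_sum
  intro b hb
  have hbx : b ≠ x := fun h => hx (h ▸ hb)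
  simp only [Equiv.trans_apply, Equiv.swap_apply_of_ne_of_ne hax hay]
  by_cases hby : b = y
  · rw [hby, Equiv.swap_apply_right]
    by_cases h : V y < V a
    · have h2 : V x < V a := hV.trans h
      simp [h, h2]
    · split <;> split <;> omega
  · rw [Equiv.swap_apply_of_ne_of_ne hbx hby]

lemma core_swap (φ : ℝ) (hφ0 : 0 < φ) (hφ1 : φ < 1) (a x y : Fin m) (B : Finset (Fin m))
    (ha : a ∉ B) (hxa : x ≠ a) (hx : x ∉ B) (hy : y ∈ B) (ω : Ranking m)
    (hxy : (ω x : ℕ) + 1 = (ω y : ℕ)) (F : ℤ → ℝ) (hF : Monotone F) :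
    ∑ V : Ranking m, φ ^ KT V ω * F (wV a B V) ≤
      ∑ V : Ranking m, φ ^ KT V ((Equiv.swap x y).trans ω) * F (wV a B V) := by
  have hxny : x ≠ y := by intro h; rw [h] at hxy; omega
  set s := Equiv.swap x y with hs
  set ω' := s.trans ω with hω'
  set e : Ranking m → Ranking m := fun V => s.trans V with he
  set d : Ranking m → ℝ := fun V => φ ^ KT V ω' * F (wV a B V) - φ ^ KT V ω * F (wV a B V)
    with hd
  rw [← sub_nonneg, ← Finset.sum_sub_distrib]
  have hsplit := Finset.sum_filter_add_sum_filter_not univ (fun V : Ranking m => V x < V y) d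
  rw [show (∑ V : Ranking m, (φ ^ KT V ω' * F (wV a B V) - φ ^ KT V ω * F (wV a B V)))
      = ∑ V : Ranking m, d V from rfl, ← hsplit]
  have heval : ∀ V : Ranking m, e V x = V y ∧ e V y = V x := by
    intro V
    constructor
    · simp [he, hs, Equiv.trans_apply, Equiv.swap_apply_left]
    · simp [he, hs, Equiv.trans_apply, Equiv.swap_apply_right]
  have hbij : ∑ V ∈ univ.filter (fun V : Ranking m => ¬ V x < V y), d V
      = ∑ V ∈ univ.filter (fun V : Ranking m => V x < V y), d (e V) := by
    apply Finset.sum_nbij' e e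
    · intro V hV
      simp only [Finset.mem_filter, Finset.mem_univ, true_and, not_lt] at *
      rw [(heval V).1, (heval V).2]
      rcases lt_or_eq_of_le hV with h | h
      · exact h
      · exact absurd (Ne.symm hxny) (fun hne => hne (V.injective h))
    · intro V hV
      simp only [Finset.mem_filter, Finset.mem_univ, true_and] at *
      rw [(heval V).1, (heval V).2]
      exact not_lt_of_gt hV
    · intro V _; rw [he]; exact swap_trans_trans x y V
    · intro V _; rw [he]; exact swap_trans_trans x y V
    · intro V _
      exact (congrArg d (swap_trans_trans x y V)).symm
  rw [hbij, ← Finset.sum_add_distrib]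
  apply Finset.sum_nonneg
  intro V hVmem
  simp only [Finset.mem_filter, Finset.mem_univ, true_and] at hVmem
  have k1 : KT V ω' = KT V ω + 1 := KT_swap V ω x y hxy hVmem
  have k2 : KT (e V) ω' = KT V ω := KT_relabel s V ω
  have k3 : KT (e V) ω = KT V ω + 1 := by
    have := KT_relabel s (e V) ω
    rw [he] at this
    rw [swap_trans_trans x y V] at this
    rw [← hω'] at this
    rw [← this, k1]  -- this : KT V ω' = KT (e V) ω
  have w1 : wV a B V ≤ wV a B (e V) := w_swap_ge a x y B ha hxa hx hy V hVmem
  have hF1 : F (wV a B V) ≤ F (wV a B (e V)) := hF w1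
  have hpow : φ ^ (KT V ω + 1) ≤ φ ^ KT V ω :=
    pow_le_pow_of_le_one (le_of_lt hφ0) (le_of_lt hφ1) (Nat.le_succ _)
  have : d V + d (e V)
      = (φ ^ KT V ω - φ ^ (KT V ω + 1)) * (F (wV a B (e V)) - F (wV a B V)) := by
    simp only [hd, k1, k2, k3]
    ring
  rw [this]
  exact mul_nonneg (sub_nonneg.mpr hpow) (sub_nonneg.mpr hF1)

end Dom1
section Pattern
open Finset
variable {m : ℕ}

lemma pos_lt_card_iff (ω : Ranking m) (S : Finset (Fin m))
    (h : ∀ s ∈ S, ∀ t, t ∉ S → ω s < ω t) (z : Fin m) :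
    z ∈ S ↔ (ω z : ℕ) < S.card := by
  constructor
  · intro hz
    have hsub : Finset.Iic (ω z) ⊆ S.image ω := by
      intro q hq
      rw [Finset.mem_Iic] at hq
      have hmem : ω.symm q ∈ S := by
        by_contra ht
        exact absurd ((h z hz _ ht).trans_le (by rw [ω.apply_symm_apply]; exact hq))
          (lt_irrefl _)
      exact Finset.mem_image.mpr ⟨ω.symm q, hmem, ω.apply_symm_apply q⟩
    have hc := Finset.card_le_card hsub
    rw [Fin.card_Iic, Finset.card_image_of_injective _ ω.injective] at hc
    omega
  · intro hlt
    by_contra hz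
    have hsub : S.image ω ⊆ Finset.Iio (ω z) := by
      intro q hq
      rcases Finset.mem_image.mp hq with ⟨s, hs, rfl⟩
      rw [Finset.mem_Iio]
      exact h s hs z hz
    have hc := Finset.card_le_card hsub
    rw [Fin.card_Iio, Finset.card_image_of_injective _ ω.injective] at hc
    omega

lemma Ltop_val_zero (a : Fin m) (ω : Ranking m) (hω : ω ∈ Ltop a) : (ω a : ℕ) = 0 := by
  have h : ∀ s ∈ ({a} : Finset (Fin m)), ∀ t, t ∉ ({a} : Finset (Fin m)) → ω s < ω t := by
    intro s hs t ht
    rw [Finset.mem_singleton] at hs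
    rw [Finset.mem_singleton] at ht
    rw [hs]
    exact hω t ht
  have := (pos_lt_card_iff ω {a} h a).mp (Finset.mem_singleton_self a)
  simp at this
  omega

lemma sum_eq_of_pattern (φ : ℝ) (a : Fin m) (B : Finset (Fin m)) (ha : a ∉ B)
    (ω ωs : Ranking m) (hω : ω ∈ Ltop a) (hωs : ωs ∈ Ltop a)
    (hpat : ∀ b ∈ B, ∀ c, c ∉ B → c ≠ a → ω b < ω c)
    (hpats : ∀ b ∈ B, ∀ c, c ∉ B → c ≠ a → ωs b < ωs c)
    (F : ℤ → ℝ) :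
    ∑ V : Ranking m, mallows1 φ ω V * F (wV a B V)
      = ∑ V : Ranking m, mallows1 φ ωs V * F (wV a B V) := by
  set σ : Ranking m := ωs.trans ω.symm with hσdef
  have hσ : ∀ z, σ z = ω.symm (ωs z) := fun z => rfl
  have hωa : ω a = ωs a := by
    have h1 := Ltop_val_zero a ω hω
    have h2 := Ltop_val_zero a ωs hωs
    exact Fin.val_injective (by omega)
  have hσa : σ a = a := by rw [hσ, ← hωa, ω.symm_apply_apply]
  have hSprop : ∀ (τ : Ranking m), τ ∈ Ltop a →
      (∀ b ∈ B, ∀ c, c ∉ B → c ≠ a → τ b < τ c) →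
      ∀ z, z ∈ insert a B ↔ (τ z : ℕ) < (insert a B).card := by
    intro τ hτ hp
    apply pos_lt_card_iff
    intro s hs t ht
    rw [Finset.mem_insert] at hs ht
    push_neg at ht
    rcases hs with rfl | hs
    · exact hτ t (ht.1)
    · exact hp s hs t ht.2 ht.1
  have hS := hSprop ω hω hpat
  have hSs := hSprop ωs hωs hpats
  have hσB : ∀ b, σ b ∈ B ↔ b ∈ B := by
    intro b
    have h1 : σ b ∈ insert a B ↔ b ∈ insert a B := by
      rw [hS (σ b), hSs b, hσ, ω.apply_symm_apply]
    have h2 : σ b = a ↔ b = a := by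
      constructor
      · intro h
        have : ωs b = ω a := by rw [← ω.apply_symm_apply (ωs b), ← hσ, h]
        rw [hωa] at this
        exact ωs.injective this
      · intro h; rw [h, hσa]
    constructor
    · intro hb
      have : b ∈ insert a B := h1.mp (Finset.mem_insert_of_mem hb)
      rcases Finset.mem_insert.mp this with rfl | h
      · exact absurd (h2.mpr rfl) (fun h => ha (h ▸ hb))
      · exact h
    · intro hb
      have : σ b ∈ insert a B := h1.mpr (Finset.mem_insert_of_mem hb)
      rcases Finset.mem_insert.mp this with h | h
      · exact absurd (h2.mp h) (fun h => ha (h ▸ hb))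
      · exact h
  have hωs_eq : σ.trans ω = ωs := by
    ext z
    simp only [Equiv.trans_apply, hσ, ω.apply_symm_apply]
  apply Fintype.sum_equiv (Equiv.mulRight σ)
  intro V
  have hmul : (Equiv.mulRight σ) V = σ.trans V := rfl
  rw [hmul]
  have hKT : KT (σ.trans V) ωs = KT V ω := by rw [← hωs_eq]; exact KT_relabel σ V ω
  have hw : wV a B (σ.trans V) = wV a B V := by
    unfold wV
    have : ∀ b ∈ B, (if (σ.trans V) b < (σ.trans V) a then (1:ℤ) else -1)
        = (if V (σ b) < V a then (1:ℤ) else -1) := by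
      intro b _
      simp only [Equiv.trans_apply, hσa]
    rw [Finset.sum_congr rfl this]
    apply Finset.sum_nbij' (fun b => σ b) (fun b => σ.symm b)
    · intro b hb; exact (hσB b).mpr hb
    · intro b hb
      have := (hσB (σ.symm b)).1
      rw [σ.apply_symm_apply] at this
      exact this hb
    · intro b _; exact σ.symm_apply_apply b
    · intro b _; exact σ.apply_symm_apply b
    · intro b _; rfl
  rw [mallows1_eq, mallows1_eq, hKT, hw, Zsum_const φ ω ωs]

lemma hstar_exists {k : ℕ} (a : Fin (k+1)) (h₁ : Ranking (k+1)) :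
    ∃ hstar : Ranking (k+1), hstar ∈ Ltop a ∧
      (∀ x y, x ≠ a → y ≠ a → (hstar x < hstar y ↔ h₁ x < h₁ y)) := by
  refine ⟨h₁.trans (Fin.cycleRange (h₁ a)), ?_, ?_⟩
  · intro b hb
    have hne : h₁ b ≠ h₁ a := fun h => hb (h₁.injective h)
    have hne' : (h₁ b : ℕ) ≠ (h₁ a : ℕ) := fun h => hne (Fin.val_injective h)
    simp only [Equiv.trans_apply, Fin.cycleRange_of_eq rfl, Fin.lt_def, Fin.val_zero]
    rcases lt_or_gt_of_ne hne with h | h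
    · rw [Fin.coe_cycleRange_of_lt h]; omega
    · rw [Fin.cycleRange_of_gt h]
      have := Fin.lt_def.mp h
      omega
  · intro x y hx hy
    have hnex : (h₁ x : ℕ) ≠ (h₁ a : ℕ) :=
      fun h => hx (h₁.injective (Fin.val_injective h))
    have hney : (h₁ y : ℕ) ≠ (h₁ a : ℕ) :=
      fun h => hy (h₁.injective (Fin.val_injective h))
    have hvx : ((Fin.cycleRange (h₁ a)) (h₁ x) : ℕ)
        = if (h₁ x : ℕ) < (h₁ a : ℕ) then (h₁ x : ℕ) + 1 else (h₁ x : ℕ) := by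
      rcases lt_or_gt_of_ne hnex with h | h
      · rw [if_pos h, Fin.coe_cycleRange_of_lt (Fin.lt_def.mpr h)]
      · rw [if_neg (by omega), Fin.cycleRange_of_gt (Fin.lt_def.mpr h)]
    have hvy : ((Fin.cycleRange (h₁ a)) (h₁ y) : ℕ)
        = if (h₁ y : ℕ) < (h₁ a : ℕ) then (h₁ y : ℕ) + 1 else (h₁ y : ℕ) := by
      rcases lt_or_gt_of_ne hney with h | h
      · rw [if_pos h, Fin.coe_cycleRange_of_lt (Fin.lt_def.mpr h)]
      · rw [if_neg (by omega), Fin.cycleRange_of_gt (Fin.lt_def.mpr h)]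
    simp only [Equiv.trans_apply, Fin.lt_def, hvx, hvy]
    split_ifs <;> omega

end Pattern
section Bubble
open Finset
variable {m : ℕ}

/-- set of "bad" pairs. -/
def badset (a : Fin m) (B : Finset (Fin m)) (ω : Ranking m) : Finset (Fin m × Fin m) :=
  univ.filter (fun p : Fin m × Fin m => p.1 ∉ B ∧ p.1 ≠ a ∧ p.2 ∈ B ∧ ω p.1 < ω p.2)

lemma Dom1_swap (φ : ℝ) (hφ0 : 0 < φ) (hφ1 : φ < 1) (a x y : Fin m) (B : Finset (Fin m))
    (ha : a ∉ B) (hxa : x ≠ a) (hx : x ∉ B) (hy : y ∈ B) (ω : Ranking m)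
    (hxy : (ω x : ℕ) + 1 = (ω y : ℕ)) (F : ℤ → ℝ) (hF : Monotone F) :
    ∑ V : Ranking m, mallows1 φ ω V * F (wV a B V) ≤
      ∑ V : Ranking m, mallows1 φ ((Equiv.swap x y).trans ω) V * F (wV a B V) := by
  have hZ : 0 < Zsum φ ω := Zsum_pos φ hφ0 ω
  have hZ' : Zsum φ ((Equiv.swap x y).trans ω) = Zsum φ ω := Zsum_const φ _ _
  simp only [mallows1_eq, hZ', div_mul_eq_mul_div, ← Finset.sum_div]
  rw [div_le_div_iff_of_pos_right hZ]
  exact core_swap φ hφ0 hφ1 a x y B ha hxa hx hy ω hxy F hF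

lemma badset_swap (a x y : Fin m) (B : Finset (Fin m)) (ω : Ranking m)
    (ha : a ∉ B) (hxa : x ≠ a) (hx : x ∉ B) (hy : y ∈ B)
    (hxy : (ω x : ℕ) + 1 = (ω y : ℕ)) :
    badset a B ((Equiv.swap x y).trans ω) = (badset a B ω).erase (x, y) := by
  have hinj : ∀ u v : Fin m, u ≠ v → (ω u : ℕ) ≠ (ω v : ℕ) := by
    intro u v huv he
    exact huv (ω.injective (Fin.val_injective he))
  ext ⟨u, v⟩
  unfold badset
  simp only [Finset.mem_filter, Finset.mem_univ, true_and, Finset.mem_erase, ne_eq,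
    Prod.mk.injEq, not_and]
  simp only [Equiv.trans_apply]
  by_cases huB : u ∈ B
  · simp [huB]
  by_cases hua : u = a
  · simp [hua]
  by_cases hvB : v ∈ B
  · have huy : u ≠ y := fun h => huB (h ▸ hy)
    have hvx : v ≠ x := fun h => hx (h ▸ hvB)
    simp only [huB, not_false_eq_true, hua, hvB, true_and, and_true, ne_eq]
    by_cases hux : u = x
    · by_cases hvy : v = y
      · rw [hux, hvy, Equiv.swap_apply_left, Equiv.swap_apply_right]
        simp only [Fin.lt_def]
        constructor
        · intro h; omega
        · rintro ⟨h1, h2⟩; exact absurd trivial (h1 trivial)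
      · rw [hux, Equiv.swap_apply_left, Equiv.swap_apply_of_ne_of_ne hvx hvy]
        have h1 := hinj v y hvy
        simp only [Fin.lt_def]
        constructor
        · intro h; exact ⟨fun _ hv => absurd hv hvy, by omega⟩
        · rintro ⟨_, h⟩; omega
    · by_cases hvy : v = y
      · rw [hvy, Equiv.swap_apply_right, Equiv.swap_apply_of_ne_of_ne hux huy]
        have h1 := hinj u x hux
        simp only [Fin.lt_def]
        constructor
        · intro h; exact ⟨fun hu => absurd hu hux, by omega⟩
        · rintro ⟨_, h⟩; omega
      · rw [Equiv.swap_apply_of_ne_of_ne hux huy, Equiv.swap_apply_of_ne_of_ne hvx hvy]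
        constructor
        · intro h; exact ⟨fun hu => absurd hu hux, h⟩
        · rintro ⟨_, h⟩; exact h
  · simp [hvB]

end Bubble
section BubbleMain
open Finset
variable {m : ℕ}

lemma Ltop_swap (a x y : Fin m) (hxa : x ≠ a) (hya : y ≠ a) (ω : Ranking m)
    (hω : ω ∈ Ltop a) : (Equiv.swap x y).trans ω ∈ Ltop a := by
  intro b hb
  have hax : a ≠ x := Ne.symm hxa
  have hay : a ≠ y := Ne.symm hya
  simp only [Equiv.trans_apply, Equiv.swap_apply_of_ne_of_ne hax hay]
  apply hω
  by_cases hbx : b = x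
  · rw [hbx, Equiv.swap_apply_left]; exact hya
  by_cases hby : b = y
  · rw [hby, Equiv.swap_apply_right]; exact hxa
  · rw [Equiv.swap_apply_of_ne_of_ne hbx hby]; exact hb

lemma Dom_of_Ltop_aux (φ : ℝ) (hφ0 : 0 < φ) (hφ1 : φ < 1) (a : Fin m) (B : Finset (Fin m))
    (ha : a ∉ B) (ωs : Ranking m) (hωs : ωs ∈ Ltop a)
    (hpats : ∀ b ∈ B, ∀ c, c ∉ B → c ≠ a → ωs b < ωs c) :
    ∀ N : ℕ, ∀ ω : Ranking m, (badset a B ω).card ≤ N → ω ∈ Ltop a →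
      ∀ F : ℤ → ℝ, Monotone F →
      ∑ V : Ranking m, mallows1 φ ω V * F (wV a B V)
        ≤ ∑ V : Ranking m, mallows1 φ ωs V * F (wV a B V) := by
  intro N
  induction N with
  | zero =>
    intro ω hcard hω F _
    have hpat : ∀ b ∈ B, ∀ c, c ∉ B → c ≠ a → ω b < ω c := by
      intro b hb c hc hca
      have hbc : b ≠ c := fun h => hc (h ▸ hb)
      rcases lt_trichotomy (ω b) (ω c) with h | h | h
      · exact h
      · exact absurd (ω.injective h) hbc
      · exfalso
        have hmem : (c, b) ∈ badset a B ω := by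
          unfold badset
          simp only [Finset.mem_filter, Finset.mem_univ, true_and]
          exact ⟨hc, hca, hb, h⟩
        have := Finset.card_pos.mpr ⟨(c, b), hmem⟩
        omega
    exact le_of_eq (sum_eq_of_pattern φ a B ha ω ωs hω hωs hpat hpats F)
  | succ N IH =>
    intro ω hcard hω F hF
    by_cases h0 : (badset a B ω).card ≤ N
    · exact IH ω h0 hω F hF
    have hne : (badset a B ω).Nonempty := Finset.card_pos.mp (by omega)
    obtain ⟨p, hp, hmin⟩ := Finset.exists_min_image (badset a B ω)
      (fun p => (ω p.2 : ℕ) - (ω p.1 : ℕ)) hne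
    have hpmem := hp
    unfold badset at hpmem
    simp only [Finset.mem_filter, Finset.mem_univ, true_and] at hpmem
    obtain ⟨hp1, hp2, hp3, hp4⟩ := hpmem
    have hp4' : (ω p.1 : ℕ) < (ω p.2 : ℕ) := Fin.lt_def.mp hp4
    have hadj : ∃ x y : Fin m, x ∉ B ∧ x ≠ a ∧ y ∈ B ∧ (ω x : ℕ) + 1 = (ω y : ℕ) := by
      by_cases hgap : (ω p.1 : ℕ) + 1 = (ω p.2 : ℕ)
      · exact ⟨p.1, p.2, hp1, hp2, hp3, hgap⟩
      · exfalso
        set q : Fin m := ⟨(ω p.1 : ℕ) + 1, by omega⟩ with hq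
        set z := ω.symm q with hz
        have hωz : ω z = q := ω.apply_symm_apply q
        have hωzval : (ω z : ℕ) = (ω p.1 : ℕ) + 1 := by rw [hωz]
        have hza : z ≠ a := by
          intro h
          have := Ltop_val_zero a ω hω
          rw [h] at hωzval
          omega
        by_cases hzB : z ∈ B
        · have hmem : (p.1, z) ∈ badset a B ω := by
            unfold badset
            simp only [Finset.mem_filter, Finset.mem_univ, true_and]
            exact ⟨hp1, hp2, hzB, Fin.lt_def.mpr (by omega)⟩
          have := hmin (p.1, z) hmem
          simp only at this
          omega
        · have hmem : (z, p.2) ∈ badset a B ω := by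
            unfold badset
            simp only [Finset.mem_filter, Finset.mem_univ, true_and]
            exact ⟨hzB, hza, hp3, Fin.lt_def.mpr (by omega)⟩
          have := hmin (z, p.2) hmem
          simp only at this
          omega
    obtain ⟨x, y, hx, hxa, hy, hxy⟩ := hadj
    have hya : y ≠ a := fun h => ha (h ▸ hy)
    have hω' : (Equiv.swap x y).trans ω ∈ Ltop a := Ltop_swap a x y hxa hya ω hω
    have hxymem : (x, y) ∈ badset a B ω := by
      unfold badset
      simp only [Finset.mem_filter, Finset.mem_univ, true_and]
      exact ⟨hx, hxa, hy, Fin.lt_def.mpr (by omega)⟩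
    have hcard' : (badset a B ((Equiv.swap x y).trans ω)).card ≤ N := by
      rw [badset_swap a x y B ω ha hxa hx hy hxy, Finset.card_erase_of_mem hxymem]
      omega
    calc ∑ V : Ranking m, mallows1 φ ω V * F (wV a B V)
        ≤ ∑ V : Ranking m, mallows1 φ ((Equiv.swap x y).trans ω) V * F (wV a B V) :=
          Dom1_swap φ hφ0 hφ1 a x y B ha hxa hx hy ω hxy F hF
      _ ≤ ∑ V : Ranking m, mallows1 φ ωs V * F (wV a B V) :=
          IH ((Equiv.swap x y).trans ω) hcard' hω' F hF

lemma Dom_of_Ltop (φ : ℝ) (hφ0 : 0 < φ) (hφ1 : φ < 1) (a : Fin m) (B : Finset (Fin m))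
    (ha : a ∉ B) (ωs : Ranking m) (hωs : ωs ∈ Ltop a)
    (hpats : ∀ b ∈ B, ∀ c, c ∉ B → c ≠ a → ωs b < ωs c)
    (ω : Ranking m) (hω : ω ∈ Ltop a) (F : ℤ → ℝ) (hF : Monotone F) :
    ∑ V : Ranking m, mallows1 φ ω V * F (wV a B V)
      ≤ ∑ V : Ranking m, mallows1 φ ωs V * F (wV a B V) :=
  Dom_of_Ltop_aux φ hφ0 hφ1 a B ha ωs hωs hpats (badset a B ω).card ω le_rfl hω F hF

end BubbleMain
section Nsample
open Finset
variable {m : ℕ}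

lemma pi_succ_rw (g : Ranking m → ℝ) (t : Ranking m → ℤ) (F : ℤ → ℝ) (n : ℕ) :
    (∑ P : Fin (n+1) → Ranking m, (∏ i, g (P i)) * F (∑ i, t (P i)))
      = ∑ x : Ranking m, ∑ Q : Fin n → Ranking m,
          (g x * ∏ i, g (Q i)) * F (t x + ∑ i, t (Q i)) := by
  rw [← Equiv.sum_comp (Fin.consEquiv (fun _ : Fin (n+1) => Ranking m))
    (fun P => (∏ i, g (P i)) * F (∑ i, t (P i))), Fintype.sum_prod_type]
  apply Finset.sum_congr rfl; intro x _
  apply Finset.sum_congr rfl; intro Q _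
  have h1 : (∏ i, g ((Fin.consEquiv (fun _ : Fin (n+1) => Ranking m)) (x, Q) i))
      = g x * ∏ i, g (Q i) := by
    rw [Fin.prod_univ_succ]
    simp [Fin.consEquiv]
  have h2 : (∑ i, t ((Fin.consEquiv (fun _ : Fin (n+1) => Ranking m)) (x, Q) i))
      = t x + ∑ i, t (Q i) := by
    rw [Fin.sum_univ_succ]
    simp [Fin.consEquiv]
  rw [h1, h2]

lemma mallows_total (φ : ℝ) (hφ0 : 0 < φ) (W : Ranking m) :
    ∀ n : ℕ, ∑ P : Fin n → Ranking m, (∏ i, mallows1 φ W (P i)) = 1 := by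
  intro n
  induction n with
  | zero => simp
  | succ n IH =>
    have := pi_succ_rw (mallows1 φ W) (fun _ => (0:ℤ)) (fun _ => (1:ℝ)) n
    simp only [mul_one] at this
    calc (∑ P : Fin (n+1) → Ranking m, ∏ i, mallows1 φ W (P i))
        = ∑ x : Ranking m, ∑ Q : Fin n → Ranking m,
            mallows1 φ W x * ∏ i, mallows1 φ W (Q i) := by
          have h := this
          convert h using 2 <;> simp [mul_one]
      _ = (∑ x : Ranking m, mallows1 φ W x)
            * (∑ Q : Fin n → Ranking m, ∏ i, mallows1 φ W (Q i)) := by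
          rw [Finset.sum_mul_sum]
      _ = 1 := by rw [sum_mallows1 φ hφ0 W, IH, one_mul]

lemma DomN (φ : ℝ) (hφ0 : 0 < φ) (a : Fin m) (B : Finset (Fin m)) (ω ωs : Ranking m)
    (hDom1 : ∀ F : ℤ → ℝ, Monotone F →
      ∑ V : Ranking m, mallows1 φ ω V * F (wV a B V)
        ≤ ∑ V : Ranking m, mallows1 φ ωs V * F (wV a B V)) :
    ∀ n : ℕ, ∀ F : ℤ → ℝ, Monotone F →
      ∑ P : Fin n → Ranking m, (∏ i, mallows1 φ ω (P i)) * F (∑ i, wV a B (P i))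
        ≤ ∑ P : Fin n → Ranking m, (∏ i, mallows1 φ ωs (P i)) * F (∑ i, wV a B (P i)) := by
  intro n
  induction n with
  | zero =>
    intro F _
    apply le_of_eq
    apply Finset.sum_congr rfl
    intro P _
    simp
  | succ n IH =>
    intro F hF
    rw [pi_succ_rw (mallows1 φ ω) (wV a B) F n, pi_succ_rw (mallows1 φ ωs) (wV a B) F n]
    have key1 : ∀ x : Ranking m,
        (∑ Q : Fin n → Ranking m, (∏ i, mallows1 φ ω (Q i)) * F (wV a B x + ∑ i, wV a B (Q i)))
        ≤ ∑ Q : Fin n → Ranking m, (∏ i, mallows1 φ ωs (Q i)) * F (wV a B x + ∑ i, wV a B (Q i)) :=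
      fun x => IH (fun t => F (wV a B x + t)) (fun s t hst => hF (by omega))
    calc (∑ x : Ranking m, ∑ Q : Fin n → Ranking m,
            (mallows1 φ ω x * ∏ i, mallows1 φ ω (Q i)) * F (wV a B x + ∑ i, wV a B (Q i)))
        = ∑ x : Ranking m, mallows1 φ ω x * ∑ Q : Fin n → Ranking m,
            (∏ i, mallows1 φ ω (Q i)) * F (wV a B x + ∑ i, wV a B (Q i)) := by
          apply Finset.sum_congr rfl; intro x _
          rw [Finset.mul_sum]
          apply Finset.sum_congr rfl; intro Q _; ring
      _ ≤ ∑ x : Ranking m, mallows1 φ ω x * ∑ Q : Fin n → Ranking m,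
            (∏ i, mallows1 φ ωs (Q i)) * F (wV a B x + ∑ i, wV a B (Q i)) := by
          apply Finset.sum_le_sum; intro x _
          exact mul_le_mul_of_nonneg_left (key1 x) (mallows1_nonneg φ hφ0 ω x)
      _ = ∑ Q : Fin n → Ranking m, (∏ i, mallows1 φ ωs (Q i)) *
            ∑ x : Ranking m, mallows1 φ ω x * F (wV a B x + ∑ i, wV a B (Q i)) := by
          simp only [Finset.mul_sum]
          rw [Finset.sum_comm]
          apply Finset.sum_congr rfl; intro Q _
          apply Finset.sum_congr rfl; intro x _; ring
      _ ≤ ∑ Q : Fin n → Ranking m, (∏ i, mallows1 φ ωs (Q i)) *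
            ∑ x : Ranking m, mallows1 φ ωs x * F (wV a B x + ∑ i, wV a B (Q i)) := by
          apply Finset.sum_le_sum; intro Q _
          apply mul_le_mul_of_nonneg_left ?_ ?_
          · have := hDom1 (fun t => F (t + ∑ i, wV a B (Q i)))
              (fun s t hst => hF (by omega))
            simpa using this
          · exact Finset.prod_nonneg (fun i _ => mallows1_nonneg φ hφ0 ωs (Q i))
      _ = ∑ x : Ranking m, ∑ Q : Fin n → Ranking m,
            (mallows1 φ ωs x * ∏ i, mallows1 φ ωs (Q i)) * F (wV a B x + ∑ i, wV a B (Q i)) := by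
          simp only [Finset.mul_sum]
          rw [Finset.sum_comm]
          apply Finset.sum_congr rfl; intro x _
          apply Finset.sum_congr rfl; intro Q _; ring

end Nsample
section KTdiff
open Finset
variable {m : ℕ}

lemma KT_cast (V W : Ranking m) :
    (KT V W : ℤ) = ∑ p : Fin m × Fin m,
      (if V p.1 < V p.2 ∧ W p.2 < W p.1 then (1:ℤ) else 0) := by
  unfold KT
  rw [Finset.card_filter]
  push_cast
  rfl

lemma KT_hstar (a : Fin m) (h₁ hstar : Ranking m) (hLt : hstar ∈ Ltop a)
    (hord : ∀ x y, x ≠ a → y ≠ a → (hstar x < hstar y ↔ h₁ x < h₁ y)) (V : Ranking m) :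
    (KT V hstar : ℤ)
      = KT V h₁ + wV a (univ.filter (fun b => h₁ b < h₁ a)) V := by
  set B := univ.filter (fun b => h₁ b < h₁ a) with hB
  have hmemB : ∀ b, b ∈ B ↔ h₁ b < h₁ a := by
    intro b; rw [hB, Finset.mem_filter]; simp
  have haB : a ∉ B := by rw [hmemB]; exact lt_irrefl _
  have hbne : ∀ b ∈ B, b ≠ a := fun b hb h => haB (h ▸ hb)
  set g : Fin m × Fin m → ℤ := fun p =>
    (if p.2 = a ∧ (p.1 ∈ B ∧ V p.1 < V a) then (1:ℤ) else 0)
    - (if p.1 = a ∧ (p.2 ∈ B ∧ V a < V p.2) then (1:ℤ) else 0) with hg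
  have claim2 : ∀ p : Fin m × Fin m,
      (if V p.1 < V p.2 ∧ hstar p.2 < hstar p.1 then (1:ℤ) else 0)
      = (if V p.1 < V p.2 ∧ h₁ p.2 < h₁ p.1 then (1:ℤ) else 0) + g p := by
    rintro ⟨u, v⟩
    simp only [hg]
    by_cases hva : v = a
    · by_cases hua : u = a
      · rw [hva, hua]
        simp [lt_irrefl, haB]
      · -- v = a, u ≠ a
        rw [hva]
        have h1 : hstar a < hstar u := hLt u hua
        have h2 : ¬ hstar u < hstar a := asymm h1
        have h3 : ¬ (a ∈ B) := haB
        by_cases huB : u ∈ B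
        · have h4 : h₁ u < h₁ a := (hmemB u).mp huB
          have h5 : ¬ h₁ a < h₁ u := asymm h4
          simp [h2, h5, huB, hua, h1]
        · have h4 : ¬ h₁ u < h₁ a := fun h => huB ((hmemB u).mpr h)
          have h5 : h₁ a < h₁ u := by
            rcases lt_trichotomy (h₁ a) (h₁ u) with h | h | h
            · exact h
            · exact absurd (h₁.injective h.symm) hua
            · exact absurd h h4
          simp [h2, h5, huB, hua, h1]
    · by_cases hua : u = a
      · rw [hua]
        have h1 : hstar a < hstar v := hLt v hva
        have h2 : ¬ hstar v < hstar a := asymm h1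
        by_cases hvB : v ∈ B
        · have h4 : h₁ v < h₁ a := (hmemB v).mp hvB
          simp [h2, h4, hvB, hva, Ne.symm hva, h1]
        · have h4 : ¬ h₁ v < h₁ a := fun h => hvB ((hmemB v).mpr h)
          simp [h2, h4, hvB, hva, Ne.symm hva, h1]
      · have h1 : hstar v < hstar u ↔ h₁ v < h₁ u := hord v u hva hua
        simp only [hua, hva, false_and, if_false, and_false, sub_zero, add_zero]
        by_cases hVuv : V u < V v
        · by_cases h2 : hstar v < hstar u
          · simp [hVuv, h2, h1.mp h2]
          · have h3 : ¬ h₁ v < h₁ u := fun h => h2 (h1.mpr h)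
            simp [hVuv, h2, h3]
        · simp [hVuv]
  have claim1 : ∑ p : Fin m × Fin m, g p = wV a B V := by
    simp only [hg]
    rw [Finset.sum_sub_distrib]
    have e1 : (∑ p : Fin m × Fin m, if p.2 = a ∧ (p.1 ∈ B ∧ V p.1 < V a) then (1:ℤ) else 0)
        = ∑ u : Fin m, (if u ∈ B ∧ V u < V a then (1:ℤ) else 0) := by
      rw [Fintype.sum_prod_type]
      apply Finset.sum_congr rfl; intro u _
      rw [show (∑ v : Fin m, if v = a ∧ (u ∈ B ∧ V u < V a) then (1:ℤ) else 0)
          = ∑ v : Fin m, if v = a then (if u ∈ B ∧ V u < V a then (1:ℤ) else 0) else 0 from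
        Finset.sum_congr rfl (fun v _ => by rw [ite_and])]
      rw [Finset.sum_ite_eq' univ a (fun _ => if u ∈ B ∧ V u < V a then (1:ℤ) else 0)]
      simp
    have e2 : (∑ p : Fin m × Fin m, if p.1 = a ∧ (p.2 ∈ B ∧ V a < V p.2) then (1:ℤ) else 0)
        = ∑ v : Fin m, (if v ∈ B ∧ V a < V v then (1:ℤ) else 0) := by
      rw [Fintype.sum_prod_type, Finset.sum_comm]
      apply Finset.sum_congr rfl; intro v _
      rw [show (∑ u : Fin m, if u = a ∧ (v ∈ B ∧ V a < V v) then (1:ℤ) else 0)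
          = ∑ u : Fin m, if u = a then (if v ∈ B ∧ V a < V v then (1:ℤ) else 0) else 0 from
        Finset.sum_congr rfl (fun u _ => by rw [ite_and])]
      rw [Finset.sum_ite_eq' univ a (fun _ => if v ∈ B ∧ V a < V v then (1:ℤ) else 0)]
      simp
    rw [e1, e2, ← Finset.sum_sub_distrib]
    have e3 : ∀ u : Fin m, ((if u ∈ B ∧ V u < V a then (1:ℤ) else 0)
        - (if u ∈ B ∧ V a < V u then (1:ℤ) else 0))
        = if u ∈ B then (if V u < V a then (1:ℤ) else -1) else 0 := by
      intro u
      by_cases huB : u ∈ B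
      · have hne : V u ≠ V a := fun h => (hbne u huB) (V.injective h)
        rcases lt_or_gt_of_ne hne with h | h
        · simp [huB, h, asymm h]
        · simp [huB, h, asymm h, not_lt_of_gt h]
      · simp [huB]
    rw [Finset.sum_congr rfl (fun u _ => e3 u)]
    rw [Finset.sum_ite_mem univ B (fun u => if V u < V a then (1:ℤ) else -1)]
    rw [Finset.univ_inter]
    rfl
  rw [KT_cast V hstar, KT_cast V h₁]
  rw [Finset.sum_congr rfl (fun p _ => claim2 p), Finset.sum_add_distrib, claim1]

end KTdiff
section Main
open Finset
variable {m : ℕ}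

lemma mallows_closed (φ : ℝ) {n : ℕ} (W : Ranking m) (P : Fin n → Ranking m) :
    mallows φ n W P = φ ^ (∑ i, KT (P i) W) / (Zsum φ W) ^ n := by
  unfold mallows
  simp only [mallows1_eq]
  rw [Finset.prod_div_distrib, Finset.prod_const, Finset.prod_pow_eq_pow_sum,
    Finset.card_univ, Fintype.card_fin]

theorem stmt0' (k n : ℕ) (φ : ℝ) (hφ0 : 0 < φ) (hφ1 : φ < 1)
    (α : ℝ) (hα0 : 0 < α) (hα1 : α < 1)
    (a : Fin (k+1)) (h₁ : Ranking (k+1)) :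
    ∃ K Γ : ℝ, 0 ≤ Γ ∧ Γ ≤ 1 ∧
      SizeEq (mallows φ n) (Ltop a)
        (wTest n (Finset.univ.filter (fun b => h₁ b < h₁ a)) a K Γ) α ∧
      IsMostPowerful (mallows φ n) (Ltop a) h₁ α
        (wTest n (Finset.univ.filter (fun b => h₁ b < h₁ a)) a K Γ) := by
  obtain ⟨hstar, hsLt, hsord⟩ := hstar_exists a h₁
  set B := Finset.univ.filter (fun b => h₁ b < h₁ a) with hB
  have hmemB : ∀ b, b ∈ B ↔ h₁ b < h₁ a := by
    intro b; rw [hB, Finset.mem_filter]; simp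
  have haB : a ∉ B := by rw [hmemB]; exact lt_irrefl _
  have hpats : ∀ b ∈ B, ∀ c, c ∉ B → c ≠ a → hstar b < hstar c := by
    intro b hb c hc hca
    have hba : b ≠ a := fun h => haB (h ▸ hb)
    have h1 : h₁ b < h₁ a := (hmemB b).mp hb
    have h2 : h₁ a < h₁ c := by
      have h3 : ¬ h₁ c < h₁ a := fun h => hc ((hmemB c).mpr h)
      rcases lt_trichotomy (h₁ a) (h₁ c) with h | h | h
      · exact h
      · exact absurd (h₁.injective h) (Ne.symm hca)
      · exact absurd h h3
    exact (hsord b c hba hca).mpr (h1.trans h2)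
  set T : (Fin n → Ranking (k+1)) → ℤ := fun P => wset P B a with hTdef
  have hT : ∀ P, T P = ∑ i, wV a B (P i) := fun P => wset_eq a B haB P
  set μ : (Fin n → Ranking (k+1)) → ℝ := fun P => mallows φ n hstar P with hμ
  have hμ0 : ∀ P, 0 ≤ μ P :=
    fun P => Finset.prod_nonneg (fun i _ => mallows1_nonneg φ hφ0 hstar (P i))
  have hμtot : ∑ P, μ P = 1 := mallows_total φ hφ0 hstar n
  have hTb : ∀ P, T P ≤ (n * B.card : ℤ) ∧ -(n * B.card : ℤ) ≤ T P := by
    intro P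
    rw [hT]
    constructor
    · calc (∑ i, wV a B (P i)) ≤ ∑ _i : Fin n, (B.card : ℤ) :=
            Finset.sum_le_sum (fun i _ => (wV_le a B (P i)).1)
        _ = (n * B.card : ℤ) := by
            rw [Finset.sum_const, Finset.card_univ, Fintype.card_fin]; push_cast; ring
    · calc (-(n * B.card : ℤ)) = ∑ _i : Fin n, (-(B.card : ℤ)) := by
            rw [Finset.sum_const, Finset.card_univ, Fintype.card_fin]; push_cast; ring
        _ ≤ ∑ i, wV a B (P i) := Finset.sum_le_sum (fun i _ => (wV_le a B (P i)).2)
  set G : ℤ → ℝ := fun t => ∑ P, μ P * (if t < T P then 1 else 0) with hG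
  have hGabove : G (n * B.card : ℤ) ≤ α := by
    have : G (n * B.card : ℤ) = 0 := by
      rw [hG]
      apply Finset.sum_eq_zero
      intro P _
      rw [if_neg (by have := (hTb P).1; omega), mul_zero]
    rw [this]; exact hα0.le
  have hGbdd : ∀ z : ℤ, G z ≤ α → -(n * B.card : ℤ) ≤ z := by
    intro z hz
    by_contra hlt
    have : G z = 1 := by
      rw [hG]
      calc (∑ P, μ P * (if z < T P then (1:ℝ) else 0)) = ∑ P, μ P := by
            apply Finset.sum_congr rfl
            intro P _
            rw [if_pos (by have := (hTb P).2; omega), mul_one]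
        _ = 1 := hμtot
    rw [this] at hz
    linarith
  obtain ⟨K, hK, hKleast⟩ := Int.exists_least_of_bdd
    (P := fun z => G z ≤ α) ⟨-(n * B.card : ℤ), hGbdd⟩ ⟨(n * B.card : ℤ), hGabove⟩
  have hKm1 : α < G (K - 1) := by
    by_contra h
    have := hKleast (K - 1) (not_lt.mp h)
    omega
  set PrK : ℝ := ∑ P, μ P * (if T P = K then 1 else 0) with hPrK
  have hsplitG : G (K - 1) = G K + PrK := by
    rw [hG, hPrK]
    rw [← Finset.sum_add_distrib]
    apply Finset.sum_congr rfl
    intro P _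
    rw [← mul_add]
    congr 1
    rcases lt_trichotomy (T P) K with h | h | h
    · rw [if_neg (by omega), if_neg (by omega), if_neg (by omega)]; ring
    · rw [if_pos (by omega), if_neg (by omega), if_pos h]; ring
    · rw [if_pos (by omega), if_pos h, if_neg (by omega)]; ring
  have hPrKpos : 0 < PrK := by linarith
  set Γ : ℝ := (α - G K) / PrK with hΓ
  have hΓ0 : 0 ≤ Γ := div_nonneg (by linarith) hPrKpos.le
  have hΓ1 : Γ ≤ 1 := by
    rw [hΓ, div_le_one hPrKpos]
    linarith
  set F : ℤ → ℝ := fun t => if K < t then 1 else if t < K then 0 else Γ with hF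
  set f : (Fin n → Ranking (k+1)) → ℝ := wTest n B a ((K : ℤ) : ℝ) Γ with hf
  have hfF : ∀ P, f P = F (T P) := by
    intro P
    have hTP : wset P B a = T P := rfl
    rw [hf, hF]
    unfold wTest
    rw [hTP]
    dsimp only
    rcases lt_trichotomy (T P) K with h | h | h
    · rw [if_neg (not_lt.mpr (Int.cast_le.mpr (by omega))),
        if_pos (Int.cast_lt.mpr h), if_neg (by omega), if_pos h]
    · rw [if_neg (not_lt.mpr (Int.cast_le.mpr (by omega))),
        if_neg (not_lt.mpr (Int.cast_le.mpr (by omega))),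
        if_neg (by omega), if_neg (by omega)]
    · rw [if_pos (Int.cast_lt.mpr h), if_pos h]
  have hF01 : ∀ t, 0 ≤ F t ∧ F t ≤ 1 := by
    intro t
    rw [hF]
    dsimp only
    split_ifs <;> constructor <;> linarith
  have hFmono : Monotone F := by
    intro s t hst
    rw [hF]
    dsimp only
    split_ifs <;> first | linarith | (exfalso; omega)
  have hIsTest : IsTest f := fun P => (hfF P) ▸ hF01 (T P)
  have hSizerw : ∀ W : Ranking (k+1), Size (mallows φ n) f W
      = ∑ P, mallows φ n W P * F (T P) := by
    intro W
    unfold Size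
    exact Finset.sum_congr rfl (fun P _ => by rw [hfF P])
  have hSizeStar : Size (mallows φ n) f hstar = α := by
    rw [hSizerw hstar]
    have hptw : ∀ P, F (T P) = (if K < T P then (1:ℝ) else 0) + Γ * (if T P = K then 1 else 0) := by
      intro P
      rw [hF]
      dsimp only
      rcases lt_trichotomy (T P) K with h | h | h
      · have c1 : ¬ K < T P := by omega
        have c3 : ¬ T P = K := by omega
        rw [if_neg c1, if_pos h, if_neg c1, if_neg c3]; ring
      · have c1 : ¬ K < T P := by omega
        have c2 : ¬ T P < K := by omega
        rw [if_neg c1, if_neg c2, if_neg c1, if_pos h]; ring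
      · have c3 : ¬ T P = K := by omega
        rw [if_pos h, if_pos h, if_neg c3]; ring
    calc (∑ P, mallows φ n hstar P * F (T P))
        = ∑ P, (μ P * (if K < T P then (1:ℝ) else 0) + Γ * (μ P * (if T P = K then 1 else 0))) := by
          apply Finset.sum_congr rfl
          intro P _
          rw [hptw P]
          ring
      _ = G K + Γ * PrK := by
          rw [Finset.sum_add_distrib, ← Finset.mul_sum, hG, hPrK]
      _ = α := by
          rw [hΓ, div_mul_cancel₀ _ (ne_of_gt hPrKpos)]
          ring
  have hSizeLe : SizeLe (mallows φ n) (Ltop a) f α := by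
    intro h₀ hh₀
    rw [hSizerw h₀]
    calc (∑ P, mallows φ n h₀ P * F (T P))
        = ∑ P : Fin n → Ranking (k+1),
            (∏ i, mallows1 φ h₀ (P i)) * F (∑ i, wV a B (P i)) := by
          apply Finset.sum_congr rfl
          intro P _
          rw [← hT P]
          rfl
      _ ≤ ∑ P : Fin n → Ranking (k+1),
            (∏ i, mallows1 φ hstar (P i)) * F (∑ i, wV a B (P i)) := by
          apply DomN φ hφ0 a B h₀ hstar ?_ n F hFmono
          intro F' hF'
          exact Dom_of_Ltop φ hφ0 hφ1 a B haB hstar hsLt hpats h₀ hh₀ F' hF'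
      _ = ∑ P, mallows φ n hstar P * F (T P) := by
          apply Finset.sum_congr rfl
          intro P _
          rw [← hT P]
          rfl
      _ = α := by rw [← hSizerw hstar, hSizeStar]
  have hφne : φ ≠ 0 := ne_of_gt hφ0
  have hπratio : ∀ P, mallows φ n h₁ P = mallows φ n hstar P * φ ^ (-(T P)) := by
    intro P
    rw [mallows_closed φ h₁ P, mallows_closed φ hstar P, Zsum_const φ h₁ hstar]
    have hKTsum : (((∑ i, KT (P i) hstar : ℕ)) : ℤ) = (((∑ i, KT (P i) h₁ : ℕ)) : ℤ) + T P := by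
      rw [hT]
      push_cast
      rw [← Finset.sum_add_distrib]
      apply Finset.sum_congr rfl
      intro i _
      have hKH := KT_hstar a h₁ hstar hsLt hsord (P i)
      rw [← hB] at hKH
      exact hKH
    have h1 : φ ^ (∑ i, KT (P i) h₁) = φ ^ ((((∑ i, KT (P i) h₁ : ℕ)) : ℤ)) :=
      (zpow_natCast φ _).symm
    have h2 : φ ^ (∑ i, KT (P i) hstar) = φ ^ ((((∑ i, KT (P i) hstar : ℕ)) : ℤ)) :=
      (zpow_natCast φ _).symm
    have hTT : φ ^ (T P) * φ ^ (-(T P)) = 1 := by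
      rw [← zpow_add₀ hφne]; simp
    rw [h1, h2, hKTsum, zpow_add₀ hφne]
    linear_combination (-(φ ^ ((((∑ i, KT (P i) h₁ : ℕ)) : ℤ)) / (Zsum φ hstar) ^ n)) * hTT
  have hπ0 : ∀ P, 0 ≤ mallows φ n hstar P := hμ0
  set c : ℝ := φ ^ (-K) with hc
  have hc0 : 0 < c := zpow_pos hφ0 _
  refine ⟨((K : ℤ) : ℝ), Γ, hΓ0, hΓ1, ⟨hSizeLe, hstar, hsLt, hSizeStar⟩, hIsTest, hSizeLe, ?_⟩
  intro g hgTest hgSize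
  have hgstar : Size (mallows φ n) g hstar ≤ α := hgSize hstar hsLt
  have hptw : ∀ P, 0 ≤ (f P - g P) * (mallows φ n h₁ P - c * mallows φ n hstar P) := by
    intro P
    rcases lt_trichotomy (T P) K with h | h | h
    · apply mul_nonneg_of_nonpos_of_nonpos
      · have hfP : f P = 0 := by
          rw [hfF P, hF]
          dsimp only
          rw [if_neg (by omega), if_pos h]
        rw [hfP]
        have := (hgTest P).1
        linarith
      · rw [hπratio P, hc]
        have hzp : φ ^ (-(T P)) < φ ^ (-K) :=
          zpow_lt_zpow_right_of_lt_one₀ hφ0 hφ1 (by omega)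
        have := hπ0 P
        nlinarith
    · rw [hπratio P, hc, h]
      ring_nf
      exact le_refl _
    · apply mul_nonneg
      · have hfP : f P = 1 := by
          rw [hfF P, hF]
          dsimp only
          rw [if_pos h]
        rw [hfP]
        have := (hgTest P).2
        linarith
      · rw [hπratio P, hc]
        have hzp : φ ^ (-K) < φ ^ (-(T P)) :=
          zpow_lt_zpow_right_of_lt_one₀ hφ0 hφ1 (by omega)
        have := hπ0 P
        nlinarith
  rw [← sub_nonneg]
  unfold Power
  rw [← Finset.sum_sub_distrib]
  have hexp : ∀ P : Fin n → Ranking (k+1),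
      mallows φ n h₁ P * f P - mallows φ n h₁ P * g P
      = (f P - g P) * (mallows φ n h₁ P - c * mallows φ n hstar P)
        + c * (mallows φ n hstar P * f P - mallows φ n hstar P * g P) := by
    intro P; ring
  rw [Finset.sum_congr rfl (fun P _ => hexp P), Finset.sum_add_distrib, ← Finset.mul_sum,
    Finset.sum_sub_distrib]
  have h1 : (0:ℝ) ≤ ∑ P, (f P - g P) * (mallows φ n h₁ P - c * mallows φ n hstar P) :=
    Finset.sum_nonneg (fun P _ => hptw P)
  have h2 : Size (mallows φ n) g hstar ≤ Size (mallows φ n) f hstar := by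
    rw [hSizeStar]; exact hgstar
  have h3 : (0:ℝ) ≤ (∑ P, mallows φ n hstar P * f P) - ∑ P, mallows φ n hstar P * g P := by
    have := sub_nonneg.mpr h2
    unfold Size at this
    linarith
  nlinarith

end Main

/-- Under Mallows' model with `n` i.i.d. samples, for any alternative `a`,
any ranking `h₁` in which `a` is not ranked at the top, and any `0<α<1`, with
`B = {b : b ≻_{h₁} a}`, there exist `K` and `Γ ∈ [0,1]` such that the threshold test on
`w_P(B≻a)` has size exactly `α` over `H₀ = L_{a≻others}` and is a level-`α` most powerful
test for `H₀` vs `h₁`. -/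
theorem stmt0 (m n : ℕ) (φ : ℝ) (hφ0 : 0 < φ) (hφ1 : φ < 1)
    (α : ℝ) (hα0 : 0 < α) (hα1 : α < 1)
    (a : Fin m) (h₁ : Ranking m) (hh₁ : h₁ ∉ Ltop a) :
    ∃ K Γ : ℝ, 0 ≤ Γ ∧ Γ ≤ 1 ∧
      SizeEq (mallows φ n) (Ltop a)
        (wTest n (Finset.univ.filter (fun b => h₁ b < h₁ a)) a K Γ) α ∧
      IsMostPowerful (mallows φ n) (Ltop a) h₁ α
        (wTest n (Finset.univ.filter (fun b => h₁ b < h₁ a)) a K Γ) := by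
  have hm : 0 < m := a.pos
  obtain ⟨k, rfl⟩ : ∃ k, m = k + 1 := ⟨m - 1, by omega⟩
  exact stmt0' k n φ hφ0 hφ1 α hα0 hα1 a h₁


end Voting
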